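/- arXiv:2209.08908 — 6 statements merged into one kernel-verified Lean document; each statement's English description precedes it below -/
import Mathlib

section
/- Exponentially weighted recursive least squares with persistent excitation converges (core of the paper's Lemma 1, parameter part): Let m ≥ 1, let (φ_t)_{t≥0} be a sequence in ℝ^m with ‖φ_t‖ ≤ M for all t and some M > 0, and suppose φ is persistently exciting: there exist T ≥ 1 and α > 0 such that for every t, ∑_{k=t}^{t+T−1} φ_k φ_kᵀ ⪰ α I_m (i.e., vᵀ(∑_{k=t}^{t+T−1} φ_k φ_kᵀ)v ≥ α‖v‖² for all v ∈ ℝ^m). Fix ζ ∈ (0,1), a symmetric positive definite Γ_0 ∈ ℝ^{m×m}, a true parameter p ∈ ℝ^m and any p̂_0 ∈ ℝ^m, and define recursively Γ_t = ζ^{−2}[Γ_{t−1} − Γ_{t−1}φ_{t−1}φ_{t−1}ᵀΓ_{t−1}/(ζ² + φ_{t−1}ᵀΓ_{t−1}φ_{t−1})] and p̂_t = p̂_{t−1} + Γ_t φ_{t−1}(φ_{t−1}ᵀ p − φ_{t−1}ᵀ p̂_{t−1}) for t ≥ 1. Then there exists C > 0 such that ‖p − p̂_t‖ ≤ C ζ^{2t}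 for all t; in particular p̂_t → p as t → ∞. -/
open Matrix Filter

/-- Matrix–vector action on Euclidean space. -/
noncomputable def mulVecE {m : ℕ} (G : Matrix (Fin m) (Fin m) ℝ)
    (v : EuclideanSpace ℝ (Fin m)) : EuclideanSpace ℝ (Fin m) := WithLp.toLp 2 (G *ᵥ v)

section aux
variable {m : ℕ}

/-- view a plain vector as an element of Euclidean space -/
abbrev toE (v : Fin m → ℝ) : EuclideanSpace ℝ (Fin m) := WithLp.toLp 2 v

lemma dot_self_eq_norm_sq (v : EuclideanSpace ℝ (Fin m)) : v ⬝ᵥ v = ‖v‖^2 := by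
  rw [EuclideanSpace.norm_eq, Real.sq_sqrt (by positivity)]
  simp [dotProduct, sq]

lemma dot_eq_inner (x y : EuclideanSpace ℝ (Fin m)) : x ⬝ᵥ y = inner ℝ x y := by
  simp [PiLp.inner_apply, dotProduct, RCLike.inner_apply, conj_trivial, mul_comm]

lemma dot_le_norm_mul (x y : EuclideanSpace ℝ (Fin m)) : x ⬝ᵥ y ≤ ‖x‖ * ‖y‖ := by
  rw [dot_eq_inner]; exact real_inner_le_norm x y

lemma abs_dot_le_norm_mul (x y : EuclideanSpace ℝ (Fin m)) : |x ⬝ᵥ y| ≤ ‖x‖ * ‖y‖ := by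
  rw [dot_eq_inner]; exact abs_real_inner_le_norm x y

lemma UGU (G : Matrix (Fin m) (Fin m) ℝ) (u : Fin m → ℝ) :
    vecMulVec u u * G * vecMulVec u u = (u ⬝ᵥ (G *ᵥ u)) • vecMulVec u u := by
  ext i j
  simp only [Matrix.mul_apply, Matrix.smul_apply, vecMulVec_apply, smul_eq_mul,
    Matrix.mulVec, dotProduct, Finset.sum_mul, Finset.mul_sum]
  rw [Finset.sum_comm]
  apply Finset.sum_congr rfl; intro k _
  apply Finset.sum_congr rfl; intro l _
  ring

lemma vecMulVec_mulVec' (u v : Fin m → ℝ) : vecMulVec u u *ᵥ v = (u ⬝ᵥ v) • u := by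
  ext i
  simp only [Matrix.mulVec, vecMulVec_apply, dotProduct, Pi.smul_apply, smul_eq_mul,
    Finset.sum_mul, Finset.mul_sum]
  apply Finset.sum_congr rfl; intro k _; ring

lemma dot_vecMulVec (u v : Fin m → ℝ) : v ⬝ᵥ (vecMulVec u u *ᵥ v) = (u ⬝ᵥ v)^2 := by
  rw [vecMulVec_mulVec', dotProduct_smul, smul_eq_mul, dotProduct_comm v u]; ring

lemma psd_vecMulVec (u : Fin m → ℝ) : (vecMulVec u u).PosSemidef := by
  refine Matrix.PosSemidef.of_dotProduct_mulVec_nonneg ?_ ?_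
  · ext i j; simp [vecMulVec_apply, mul_comm]
  · intro x
    rw [vecMulVec_mulVec', dotProduct_smul]
    simp only [star_trivial, smul_eq_mul, dotProduct_comm x u]
    exact mul_self_nonneg _

lemma sum_mulVec' {s : Finset ℕ} (A : ℕ → Matrix (Fin m) (Fin m) ℝ) (v : Fin m → ℝ) :
    (∑ k ∈ s, A k) *ᵥ v = ∑ k ∈ s, A k *ᵥ v := by
  ext i
  simp only [Matrix.mulVec, dotProduct, Matrix.sum_apply, Finset.sum_apply, Finset.sum_mul]
  rw [Finset.sum_comm]

lemma dot_sum' {s : Finset ℕ} (f : ℕ → Fin m → ℝ) (v : Fin m → ℝ) :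
    v ⬝ᵥ (∑ k ∈ s, f k) = ∑ k ∈ s, v ⬝ᵥ f k := by
  simp only [dotProduct, Finset.sum_apply, Finset.mul_sum]
  rw [Finset.sum_comm]

lemma rls_step {G G' : Matrix (Fin m) (Fin m) ℝ} (hG : G.PosDef)
    {u : Fin m → ℝ} {ζ : ℝ} (hζ : 0 < ζ)
    (hG' : G' = (ζ ^ 2)⁻¹ • (G - (ζ ^ 2 + u ⬝ᵥ (G *ᵥ u))⁻¹ • (G * vecMulVec u u * G))) :
    G' * (ζ ^ 2 • G⁻¹ + vecMulVec u u) = 1 := by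
  have hζ2 : (0:ℝ) < ζ ^ 2 := by positivity
  have hs : 0 ≤ u ⬝ᵥ (G *ᵥ u) := by
    have := hG.posSemidef.dotProduct_mulVec_nonneg u
    simpa using this
  set s : ℝ := u ⬝ᵥ (G *ᵥ u) with hsdef
  have hc : ζ ^ 2 + s ≠ 0 := by nlinarith
  have hGinv : G * G⁻¹ = 1 := Matrix.mul_nonsing_inv _ (isUnit_iff_ne_zero.mpr hG.det_pos.ne')
  set U : Matrix (Fin m) (Fin m) ℝ := vecMulVec u u with hU
  have h1 : (G * U * G) * (ζ ^ 2 • G⁻¹) = ζ ^ 2 • (G * U) := by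
    rw [Matrix.mul_smul, Matrix.mul_assoc (G * U) G G⁻¹, hGinv, Matrix.mul_one]
  have h2 : (G * U * G) * U = s • (G * U) := by
    rw [Matrix.mul_assoc (G * U) G U, Matrix.mul_assoc G U (G * U), ← Matrix.mul_assoc U G U,
      UGU, ← hsdef, Matrix.mul_smul]
  have expand : (G - (ζ ^ 2 + s)⁻¹ • (G * U * G)) * (ζ ^ 2 • G⁻¹ + U)
      = ζ ^ 2 • (1 : Matrix (Fin m) (Fin m) ℝ) := by
    rw [Matrix.sub_mul, Matrix.mul_add, Matrix.mul_add, Matrix.mul_smul, hGinv,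
      Matrix.smul_mul, Matrix.smul_mul, h1, h2, smul_smul, smul_smul]
    have hc1 : (ζ ^ 2 + s)⁻¹ * ζ ^ 2 + (ζ ^ 2 + s)⁻¹ * s = 1 := by
      field_simp
    have : ((ζ ^ 2 + s)⁻¹ * ζ ^ 2) • (G * U) + ((ζ ^ 2 + s)⁻¹ * s) • (G * U) = G * U := by
      rw [← add_smul, hc1, one_smul]
    rw [this, add_sub_cancel_right]
  rw [hG', Matrix.smul_mul, expand, smul_smul, inv_mul_cancel₀ hζ2.ne', one_smul]

end aux

set_option maxHeartbeats 1000000 in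
/-- Exponentially weighted recursive least squares with persistent excitation
converges geometrically (parameter part of the paper's Lemma 1). -/
theorem rls_persistent_excitation_converges
    (m : ℕ) (hm : 1 ≤ m)
    (φ : ℕ → EuclideanSpace ℝ (Fin m))
    (M : ℝ) (hM : 0 < M) (hφbd : ∀ t, ‖φ t‖ ≤ M)
    (T : ℕ) (hT : 1 ≤ T) (α : ℝ) (hα : 0 < α)
    (hPE : ∀ t : ℕ, ∀ v : EuclideanSpace ℝ (Fin m),
      α * ‖v‖ ^ 2 ≤ v ⬝ᵥ ((∑ k ∈ Finset.Ico t (t + T), vecMulVec (φ k) (φ k)) *ᵥ v))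
    (ζ : ℝ) (hζ : ζ ∈ Set.Ioo (0 : ℝ) 1)
    (Γ : ℕ → Matrix (Fin m) (Fin m) ℝ) (hΓ0 : (Γ 0).PosDef)
    (hΓ : ∀ t : ℕ, Γ (t + 1) =
      (ζ ^ 2)⁻¹ • (Γ t - (ζ ^ 2 + φ t ⬝ᵥ (Γ t *ᵥ φ t))⁻¹ •
        (Γ t * vecMulVec (φ t) (φ t) * Γ t)))
    (p : EuclideanSpace ℝ (Fin m)) (phat : ℕ → EuclideanSpace ℝ (Fin m))
    (hphat : ∀ t : ℕ, phat (t + 1) =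
      phat t + (φ t ⬝ᵥ p - φ t ⬝ᵥ phat t) • mulVecE (Γ (t + 1)) (φ t)) :
    (∃ C > (0 : ℝ), ∀ t : ℕ, ‖p - phat t‖ ≤ C * ζ ^ (2 * t)) ∧
      Tendsto phat atTop (nhds p) := by
  obtain ⟨hζ0, hζ1⟩ := hζ
  have hζ2 : (0:ℝ) < ζ ^ 2 := by positivity
  have hζ2le : ζ ^ 2 ≤ 1 := by nlinarith
  -- Positive definiteness of all Γ t, and inverse recursion
  have hpd : ∀ t, (Γ t).PosDef := by
    intro t
    induction t with
    | zero => exact hΓ0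
    | succ n ih =>
      have hApd : (ζ ^ 2 • (Γ n)⁻¹ + vecMulVec (φ n) (φ n)).PosDef := by
        refine Matrix.PosDef.add_posSemidef (Matrix.PosDef.of_dotProduct_mulVec_pos ?_ ?_) (psd_vecMulVec _)
        · have h := ih.inv.isHermitian
          unfold Matrix.IsHermitian at h ⊢
          rw [Matrix.conjTranspose_smul, h, star_trivial]
        · intro x hx
          rw [Matrix.smul_mulVec, dotProduct_smul]
          exact smul_pos hζ2 (ih.inv.dotProduct_mulVec_pos hx)
      have h2 : (ζ ^ 2 • (Γ n)⁻¹ + vecMulVec (φ n) (φ n))⁻¹ = Γ (n+1) :=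
        Matrix.inv_eq_left_inv (rls_step ih hζ0 (hΓ n))
      rw [← h2]; exact hApd.inv
  have hdet : ∀ t, IsUnit (Γ t).det := fun t => isUnit_iff_ne_zero.mpr (hpd t).det_pos.ne'
  have hinv : ∀ t, (Γ (t+1))⁻¹ = ζ ^ 2 • (Γ t)⁻¹ + vecMulVec (φ t) (φ t) :=
    fun t => Matrix.inv_eq_right_inv (rls_step (hpd t) hζ0 (hΓ t))
  have hmulG : ∀ t (x : Fin m → ℝ), Γ t *ᵥ ((Γ t)⁻¹ *ᵥ x) = x := by
    intro t x
    rw [Matrix.mulVec_mulVec, Matrix.mul_nonsing_inv _ (hdet t), Matrix.one_mulVec]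
  have hmulG' : ∀ t (x : Fin m → ℝ), (Γ t)⁻¹ *ᵥ (Γ t *ᵥ x) = x := by
    intro t x
    rw [Matrix.mulVec_mulVec, Matrix.nonsing_inv_mul _ (hdet t), Matrix.one_mulVec]
  -- error dynamics, in plain vector form
  set E : ℕ → Fin m → ℝ := fun t i => p i - phat t i with hEdef
  have hsubE : ∀ t, p - phat t = toE (E t) := by
    intro t; ext i; rfl
  have hE : ∀ n : ℕ, E (n+1) = E n - (φ n ⬝ᵥ E n) • (Γ (n+1) *ᵥ φ n) := by
    intro n
    funext i
    have h := congrArg (fun x => x i) (hphat n)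
    show p i - phat (n+1) i = E n i - (φ n ⬝ᵥ E n) * (Γ (n+1) *ᵥ φ n) i
    rw [h]
    show p i - (phat n i + (φ n ⬝ᵥ p - φ n ⬝ᵥ phat n) * (Γ (n+1) *ᵥ φ n) i) = _
    have hd : φ n ⬝ᵥ p - φ n ⬝ᵥ phat n = φ n ⬝ᵥ E n := by
      simp only [dotProduct, hEdef, mul_sub, Finset.sum_sub_distrib]
    rw [hd]
    show _ = (p i - phat n i) - (φ n ⬝ᵥ E n) * (Γ (n+1) *ᵥ φ n) i
    ring
  set w : Fin m → ℝ := (Γ 0)⁻¹ *ᵥ E 0 with hw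
  have hmul : ∀ t, (Γ t)⁻¹ *ᵥ E t = (ζ ^ 2) ^ t • w := by
    intro t
    induction t with
    | zero => rw [pow_zero, one_smul]
    | succ n ih =>
      rw [hE n, Matrix.mulVec_sub, Matrix.mulVec_smul, hmulG' (n+1), hinv n,
        Matrix.add_mulVec, Matrix.smul_mulVec, vecMulVec_mulVec',
        add_sub_cancel_right, ih, smul_smul, ← pow_succ']
  have het : ∀ t, E t = (ζ ^ 2) ^ t • (Γ t *ᵥ w) := by
    intro t
    have h := congrArg (fun x => Γ t *ᵥ x) (hmul t)
    simpa only [hmulG t, Matrix.mulVec_smul] using h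
  -- quadratic form of the inverse
  set Q : ℕ → (Fin m → ℝ) → ℝ := fun t v => v ⬝ᵥ ((Γ t)⁻¹ *ᵥ v) with hQdef
  have hQnonneg : ∀ t (v : Fin m → ℝ), 0 ≤ Q t v := by
    intro t v
    have h := (hpd t).inv.posSemidef.dotProduct_mulVec_nonneg v
    simpa using h
  have hQstep : ∀ t (v : Fin m → ℝ),
      Q (t+1) v = ζ ^ 2 * Q t v + (φ t ⬝ᵥ v)^2 := by
    intro t v
    show v ⬝ᵥ ((Γ (t+1))⁻¹ *ᵥ v) = _
    rw [hinv t, Matrix.add_mulVec, Matrix.smul_mulVec, dotProduct_add,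
      dotProduct_smul, dot_vecMulVec]
    simp [smul_eq_mul]
    exact Or.inl rfl
  have hQgeom : ∀ n t (v : Fin m → ℝ),
      ζ ^ (2*n) * (Q t v + ∑ k ∈ Finset.Ico t (t+n), (φ k ⬝ᵥ v)^2) ≤ Q (t+n) v := by
    intro n
    induction n with
    | zero => intro t v; simp
    | succ n ih =>
      intro t v
      have h1 := ih t v
      have hsum : ∑ k ∈ Finset.Ico t (t+(n+1)), (φ k ⬝ᵥ v)^2
          = (∑ k ∈ Finset.Ico t (t+n), (φ k ⬝ᵥ v)^2) + (φ (t+n) ⬝ᵥ v)^2 :=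
        Finset.sum_Ico_succ_top (Nat.le_add_right t n) _
      have hple : ζ ^ (2*(n+1)) ≤ 1 := pow_le_one₀ hζ0.le hζ1.le
      have hpow : ζ ^ (2*(n+1)) = ζ ^ 2 * ζ ^ (2*n) := by ring
      have e1 : ζ ^ 2 * (ζ ^ (2*n) * (Q t v + ∑ k ∈ Finset.Ico t (t+n), (φ k ⬝ᵥ v)^2))
          ≤ ζ ^ 2 * Q (t+n) v := mul_le_mul_of_nonneg_left h1 hζ2.le
      have e2 : ζ ^ (2*(n+1)) * (φ (t+n) ⬝ᵥ v)^2 ≤ (φ (t+n) ⬝ᵥ v)^2 :=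
        mul_le_of_le_one_left (sq_nonneg _) hple
      have hQs : Q (t+(n+1)) v = ζ ^ 2 * Q (t+n) v + (φ (t+n) ⬝ᵥ v)^2 := hQstep (t+n) v
      rw [hQs, hsum, hpow]
      nlinarith [e1, e2]
  have hPE' : ∀ t (v : EuclideanSpace ℝ (Fin m)),
      α * ‖v‖ ^ 2 ≤ ∑ k ∈ Finset.Ico t (t+T), (φ k ⬝ᵥ v)^2 := by
    intro t v
    have h := hPE t v
    rw [sum_mulVec', dot_sum'] at h
    calc α * ‖v‖ ^ 2 ≤ ∑ k ∈ Finset.Ico t (t+T), v ⬝ᵥ (vecMulVec (φ k) (φ k) *ᵥ v) := h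
      _ = ∑ k ∈ Finset.Ico t (t+T), (φ k ⬝ᵥ v)^2 :=
          Finset.sum_congr rfl fun k _ => dot_vecMulVec _ _
  -- lower bound for Q 0 from positive definiteness of Γ 0
  obtain ⟨β₀, hβ₀, hQ0lb⟩ : ∃ β₀ > (0:ℝ), ∀ v : EuclideanSpace ℝ (Fin m),
      β₀ * ‖v‖^2 ≤ Q 0 v := by
    set L := LinearMap.toContinuousLinearMap (Matrix.toEuclideanLin (Γ 0)) with hL
    set c : ℝ := ‖L‖ + 1 with hc
    have hcpos : 0 < c := by
      have := norm_nonneg L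
      rw [hc]; linarith
    have hbnd : ∀ x : EuclideanSpace ℝ (Fin m), ‖toE (Γ 0 *ᵥ x)‖ ≤ c * ‖x‖ := by
      intro x
      have h1 : ‖L x‖ ≤ ‖L‖ * ‖x‖ := L.le_opNorm x
      have hLx : L x = toE (Γ 0 *ᵥ x) := rfl
      rw [hLx] at h1
      have h2 : ‖L‖ * ‖x‖ ≤ c * ‖x‖ :=
        mul_le_mul_of_nonneg_right (by rw [hc]; linarith) (norm_nonneg _)
      exact le_trans h1 h2
    -- Cauchy–Schwarz for the Γ 0 bilinear form
    have hCS : ∀ x y : Fin m → ℝ,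
        (x ⬝ᵥ (Γ 0 *ᵥ y))^2 ≤ (x ⬝ᵥ (Γ 0 *ᵥ x)) * (y ⬝ᵥ (Γ 0 *ᵥ y)) := by
      intro x y
      obtain ⟨S, hS⟩ : ∃ S : Matrix (Fin m) (Fin m) ℝ, Γ 0 = star S * S := by
        open scoped MatrixOrder in
        exact CStarAlgebra.nonneg_iff_eq_star_mul_self.mp hΓ0.posSemidef.nonneg
      have hSS : Sᵀ * S = Γ 0 := hS.symm
      have key : ∀ a b : Fin m → ℝ, a ⬝ᵥ (Γ 0 *ᵥ b) = toE (S *ᵥ a) ⬝ᵥ toE (S *ᵥ b) := by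
        intro a b
        rw [← hSS, ← Matrix.mulVec_mulVec, Matrix.dotProduct_mulVec]
        congr 1
        rw [Matrix.vecMul_transpose]
      rw [key x y, key x x, key y y]
      have habs := abs_dot_le_norm_mul (toE (S *ᵥ x)) (toE (S *ᵥ y))
      have h3 := pow_le_pow_left₀ (abs_nonneg _) habs 2
      rw [sq_abs, mul_pow] at h3
      rw [dot_self_eq_norm_sq, dot_self_eq_norm_sq]
      exact h3
    refine ⟨c⁻¹, by positivity, ?_⟩
    intro v
    rcases eq_or_ne v 0 with rfl | hv
    · have h := hQnonneg 0 0
      simpa using h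
    · set y : Fin m → ℝ := (Γ 0)⁻¹ *ᵥ v with hy
      have hvy : Γ 0 *ᵥ y = v := hmulG 0 v
      have h1 : (‖v‖^2)^2 = (v ⬝ᵥ (Γ 0 *ᵥ y))^2 := by
        rw [hvy, dot_self_eq_norm_sq]
      have h2 := hCS v y
      have h3 : v ⬝ᵥ (Γ 0 *ᵥ v) ≤ c * ‖v‖^2 := by
        calc v ⬝ᵥ (Γ 0 *ᵥ v) ≤ ‖v‖ * ‖toE (Γ 0 *ᵥ v)‖ := dot_le_norm_mul v (toE (Γ 0 *ᵥ v))
          _ ≤ ‖v‖ * (c * ‖v‖) := mul_le_mul_of_nonneg_left (hbnd v) (norm_nonneg _)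
          _ = c * ‖v‖^2 := by ring
      have h4 : y ⬝ᵥ (Γ 0 *ᵥ y) = Q 0 v := by
        rw [hvy]
        show y ⬝ᵥ v = v ⬝ᵥ ((Γ 0)⁻¹ *ᵥ v)
        rw [← hy, dotProduct_comm]
      have hvpos : 0 < ‖v‖ := norm_pos_iff.mpr hv
      have hQpos : 0 ≤ Q 0 v := hQnonneg 0 v
      have h5 : (v ⬝ᵥ (Γ 0 *ᵥ v)) * Q 0 v ≤ (c * ‖v‖^2) * Q 0 v :=
        mul_le_mul_of_nonneg_right h3 hQpos
      rw [inv_mul_le_iff₀ hcpos]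
      have h6 : (‖v‖^2)^2 ≤ c * ‖v‖^2 * Q 0 v := by
        calc (‖v‖^2)^2 = (v ⬝ᵥ (Γ 0 *ᵥ y))^2 := h1
          _ ≤ (v ⬝ᵥ (Γ 0 *ᵥ v)) * (y ⬝ᵥ (Γ 0 *ᵥ y)) := h2
          _ = (v ⬝ᵥ (Γ 0 *ᵥ v)) * Q 0 v := by rw [h4]
          _ ≤ c * ‖v‖^2 * Q 0 v := h5
      have h8 : ‖v‖^2 * ‖v‖^2 ≤ (c * Q 0 v) * ‖v‖^2 := by nlinarith [h6]
      exact le_of_mul_le_mul_right h8 (pow_pos hvpos 2)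
  -- uniform lower bound for all Q t
  set β : ℝ := ζ ^ (2*T) * min α β₀ with hβ
  have hβpos : 0 < β := by
    have := lt_min hα hβ₀
    positivity
  have hQlb : ∀ t (v : EuclideanSpace ℝ (Fin m)), β * ‖v‖^2 ≤ Q t v := by
    intro t v
    have hzT : (0:ℝ) < ζ ^ (2*T) := by positivity
    rcases le_or_gt T t with h | h
    · have h1 := hQgeom T (t - T) v
      rw [Nat.sub_add_cancel h] at h1
      have h2 := hPE' (t - T) v
      rw [Nat.sub_add_cancel h] at h2
      have h0 := hQnonneg (t - T) v
      have hmin : min α β₀ * ‖v‖^2 ≤ Q (t-T) v + ∑ k ∈ Finset.Ico (t-T) t, (φ k ⬝ᵥ v)^2 := by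
        have := mul_le_mul_of_nonneg_right (min_le_left α β₀) (sq_nonneg ‖v‖)
        linarith
      have hfin := mul_le_mul_of_nonneg_left hmin hzT.le
      rw [hβ]
      nlinarith [h1, hfin]
    · have h1 := hQgeom t 0 v
      rw [zero_add] at h1
      have h2 := hQ0lb v
      have hsumnn : 0 ≤ ∑ k ∈ Finset.Ico 0 t, (φ k ⬝ᵥ v)^2 :=
        Finset.sum_nonneg fun k _ => sq_nonneg _
      have hzt : ζ ^ (2*T) ≤ ζ ^ (2*t) :=
        pow_le_pow_of_le_one hζ0.le hζ1.le (by omega)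
      have hmin : min α β₀ * ‖v‖^2 ≤ Q 0 v := by
        have := mul_le_mul_of_nonneg_right (min_le_right α β₀) (sq_nonneg ‖v‖)
        linarith
      have hznn : (0:ℝ) < ζ ^ (2*t) := by positivity
      have hminnn : 0 ≤ min α β₀ * ‖v‖^2 :=
        mul_nonneg (le_of_lt (lt_min hα hβ₀)) (sq_nonneg _)
      have e1 : ζ ^ (2*t) * (min α β₀ * ‖v‖^2)
          ≤ ζ ^ (2*t) * (Q 0 v + ∑ k ∈ Finset.Ico 0 t, (φ k ⬝ᵥ v)^2) := by
        apply mul_le_mul_of_nonneg_left _ hznn.le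
        linarith
      have e2 : ζ ^ (2*T) * (min α β₀ * ‖v‖^2) ≤ ζ ^ (2*t) * (min α β₀ * ‖v‖^2) :=
        mul_le_mul_of_nonneg_right hzt hminnn
      rw [hβ]
      calc ζ ^ (2*T) * min α β₀ * ‖v‖^2 = ζ ^ (2*T) * (min α β₀ * ‖v‖^2) := by ring
        _ ≤ ζ ^ (2*t) * (min α β₀ * ‖v‖^2) := e2
        _ ≤ ζ ^ (2*t) * (Q 0 v + ∑ k ∈ Finset.Ico 0 t, (φ k ⬝ᵥ v)^2) := e1
        _ ≤ Q t v := h1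
  -- conclusion
  set C : ℝ := (‖toE w‖ + 1) / β with hC
  have hCpos : 0 < C := by
    have h := norm_nonneg (toE w)
    rw [hC]; positivity
  have hbound : ∀ t, ‖p - phat t‖ ≤ C * ζ ^ (2*t) := by
    intro t
    rw [hsubE t]
    have hzt : (0:ℝ) < ζ ^ (2*t) := by positivity
    have hq : Q t (E t) = (ζ ^ 2) ^ t * (E t ⬝ᵥ w) := by
      show E t ⬝ᵥ ((Γ t)⁻¹ *ᵥ E t) = _
      rw [hmul t, dotProduct_smul, smul_eq_mul]
    have hcs : E t ⬝ᵥ w ≤ ‖toE (E t)‖ * ‖toE w‖ := dot_le_norm_mul (toE (E t)) (toE w)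
    have hkey : β * ‖toE (E t)‖^2 ≤ ζ ^ (2*t) * (‖toE (E t)‖ * ‖toE w‖) := by
      have h1 := hQlb t (toE (E t))
      have h2 : Q t (E t) ≤ (ζ ^ 2) ^ t * (‖toE (E t)‖ * ‖toE w‖) := by
        rw [hq]
        exact mul_le_mul_of_nonneg_left hcs (by positivity)
      rw [← pow_mul] at h2
      exact le_trans h1 h2
    rcases eq_or_lt_of_le (norm_nonneg (toE (E t))) with h0 | h0
    · rw [← h0]
      positivity
    · have h3 : ‖toE (E t)‖ * β ≤ ζ ^ (2*t) * ‖toE w‖ := by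
        have hstep := mul_le_mul_of_nonneg_right hkey (le_of_lt (inv_pos.mpr h0))
        calc ‖toE (E t)‖ * β = (β * ‖toE (E t)‖^2) * ‖toE (E t)‖⁻¹ := by
              field_simp
          _ ≤ (ζ ^ (2*t) * (‖toE (E t)‖ * ‖toE w‖)) * ‖toE (E t)‖⁻¹ := hstep
          _ = ζ ^ (2*t) * ‖toE w‖ := by
              field_simp
      calc ‖toE (E t)‖ ≤ ζ ^ (2*t) * ‖toE w‖ / β := by
            rw [le_div_iff₀ hβpos]; exact h3
        _ ≤ C * ζ ^ (2*t) := by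
            rw [hC, div_mul_eq_mul_div, div_le_div_iff₀ hβpos hβpos]
            nlinarith [hzt, hβpos, norm_nonneg (toE w)]
  refine ⟨⟨C, hCpos, hbound⟩, ?_⟩
  rw [tendsto_iff_norm_sub_tendsto_zero]
  have hz1 : ζ ^ 2 < 1 := by nlinarith
  have hlim : Tendsto (fun t : ℕ => C * ζ ^ (2*t)) atTop (nhds 0) := by
    have h1 : Tendsto (fun t : ℕ => (ζ ^ 2) ^ t) atTop (nhds 0) :=
      tendsto_pow_atTop_nhds_zero_of_lt_one hζ2.le hz1
    have h2 := h1.const_mul C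
    rw [mul_zero] at h2
    convert h2 using 2 with t
    rw [← pow_mul]
  apply squeeze_zero (fun t => norm_nonneg _) _ hlim
  intro t
  rw [norm_sub_rev]
  exact hbound t
end

section
/- Bound on the prediction uncertainty (equation (20) of the paper): Let F ∈ ℝ^{n×n}, W ⊆ ℝ^n, X̂ ⊆ ℝ^n, U ⊆ ℝ, Ψ_A ⊆ ℝ^{n×n}, and Ψ̃ ⊆ ℝ^{n×(n+1)}. Define Ω₃ := { ψ̄ ẑ : ψ̄ ∈ Ψ̃, ẑ = (x̂ᵀ, u)ᵀ with x̂ ∈ X̂, u ∈ U } ⊆ ℝ^n, assume Ω₃ is nonempty and convex, and define Ω₂ := { (Â − F) x̃ : Â ∈ Ψ_A, x̃ ∈ W } + Ω₃ (Minkowski sum). Let i ≥ 0, let x̃ ∈ W, Â ∈ Ψ_A, let ψ̂_0, ψ̂_1, …, ψ̂_{i+1} ∈ ℝ^{n×(n+1)} satisfy ψ̂_{k+1} − ψ̂_k ∈ Ψ̃ for every k = 0, …, i, and let ẑ = (x̂ᵀ, u)ᵀ with x̂ ∈ X̂ and u ∈ U. Then (Â − F) x̃ + (ψ̂_{i+1}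 − ψ̂_0) ẑ ∈ Ω₂ + i•Ω₃. -/
open Matrix Pointwise

/-- Bound on the prediction uncertainty (equation (20) of the paper). -/
theorem prediction_uncertainty_bound
    (n : ℕ) (F : Matrix (Fin n) (Fin n) ℝ)
    (W Xhat : Set (Fin n → ℝ)) (U : Set ℝ)
    (ΨA : Set (Matrix (Fin n) (Fin n) ℝ))
    (Ψtilde : Set (Matrix (Fin n) (Fin (n + 1)) ℝ))
    (Ω₂ Ω₃ : Set (Fin n → ℝ))
    (hΩ₃ : Ω₃ = {v | ∃ ψ ∈ Ψtilde, ∃ xhat ∈ Xhat, ∃ u ∈ U, v = ψ *ᵥ Fin.snoc xhat u})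
    (hΩ₃ne : Ω₃.Nonempty) (hΩ₃conv : Convex ℝ Ω₃)
    (hΩ₂ : Ω₂ = {v | ∃ Ahat ∈ ΨA, ∃ xt ∈ W, v = (Ahat - F) *ᵥ xt} + Ω₃)
    (i : ℕ)
    (xtilde : Fin n → ℝ) (hxtilde : xtilde ∈ W)
    (Ahat : Matrix (Fin n) (Fin n) ℝ) (hAhat : Ahat ∈ ΨA)
    (ψhat : ℕ → Matrix (Fin n) (Fin (n + 1)) ℝ)
    (hdrift : ∀ k : ℕ, k ≤ i → ψhat (k + 1) - ψhat k ∈ Ψtilde)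
    (xhat : Fin n → ℝ) (hxhat : xhat ∈ Xhat) (u : ℝ) (hu : u ∈ U) :
    (Ahat - F) *ᵥ xtilde + (ψhat (i + 1) - ψhat 0) *ᵥ Fin.snoc xhat u ∈
      Ω₂ + (i : ℝ) • Ω₃ := by
  -- sums of m elements of Ω₃ lie in m • Ω₃
  have key : ∀ (m : ℕ) (v : ℕ → Fin n → ℝ), (∀ k < m, v k ∈ Ω₃) →
      (∑ k ∈ Finset.range m, v k) ∈ (m : ℝ) • Ω₃ := by
    intro m
    induction m with
    | zero =>
      intro v _
      simp [Set.zero_smul_set hΩ₃ne]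
    | succ m ih =>
      intro v hv
      have h1 : ((m : ℝ) + 1) • Ω₃ = (m : ℝ) • Ω₃ + (1 : ℝ) • Ω₃ :=
        hΩ₃conv.add_smul (by positivity) zero_le_one
      rw [Finset.sum_range_succ]
      have : ((m + 1 : ℕ) : ℝ) • Ω₃ = (m : ℝ) • Ω₃ + (1 : ℝ) • Ω₃ := by
        push_cast; exact h1
      rw [this]
      exact Set.add_mem_add (ih v fun k hk => hv k (Nat.lt_succ_of_lt hk))
        (by rw [one_smul]; exact hv m (Nat.lt_succ_self m))
  set z : Fin (n+1) → ℝ := Fin.snoc xhat u with hz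
  set g : ℕ → Fin n → ℝ := fun k => ψhat k *ᵥ z with hg
  have htel : (ψhat (i + 1) - ψhat 0) *ᵥ z = ∑ k ∈ Finset.range (i + 1), (g (k + 1) - g k) := by
    rw [Finset.sum_range_sub, hg]
    simp [Matrix.sub_mulVec]
  have hmem : ∀ k ≤ i, g (k + 1) - g k ∈ Ω₃ := by
    intro k hk
    rw [hΩ₃]
    exact ⟨ψhat (k + 1) - ψhat k, hdrift k hk, xhat, hxhat, u, hu, by
      simp [hg, hz, Matrix.sub_mulVec]⟩
  rw [htel, Finset.sum_range_succ']
  have h2 : (Ahat - F) *ᵥ xtilde + (g (0 + 1) - g 0) ∈ Ω₂ := by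
    rw [hΩ₂]
    exact Set.add_mem_add ⟨Ahat, hAhat, xtilde, hxtilde, rfl⟩ (hmem 0 (Nat.zero_le i))
  have h3 : (∑ k ∈ Finset.range i, (g (k + 1 + 1) - g (k + 1))) ∈ (i : ℝ) • Ω₃ :=
    key i _ fun k hk => hmem (k + 1) hk
  have := Set.add_mem_add h2 h3
  convert this using 1
  abel
end

section
/- Lemma 2 of the paper (constraint satisfaction under feasibility, hypothesis-explicit form): Let n, N ≥ 1, F, A ∈ ℝ^{n×n}, b ∈ ℝ^n, let X ⊆ ℝ^n, U ⊆ ℝ, and W, Ω₁ ⊆ ℝ^n with F·W + Ω₁ ⊆ W. Let (Â_i)_{i≥1} in ℝ^{n×n} and (b̂_i)_{i≥1} in ℝ^n be parameter estimates such that for every i ≥ 0 and every x ∈ X, u ∈ U: (A − Â_{i+1})x + (b − b̂_{i+1})u ∈ Ω₁. Let (u_i)_{i≥0} be inputs, let (x_i) satisfy the plant dynamics x_{i+1} = A x_i + b u_i, let (x̂_i) satisfy the observer dynamics x̂_{i+1} = F x̂_i + (Â_{i+1} − F) x_i + b̂_{i+1} u_i, and set x̃_i := x_i − x̂_i. Assume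 x_0 ∈ X, x̃_0 ∈ W, and for every i = 1, …, N: u_{i−1} ∈ U and x̂_i ∈ X ⊖ W. Then for every i = 1, …, N: x̃_i ∈ W and x_i ∈ X. -/
open Matrix Pointwise

/-- Pontryagin difference of two subsets of ℝⁿ. -/
def pontryaginDiff {n : ℕ} (A B : Set (Fin n → ℝ)) : Set (Fin n → ℝ) :=
  {x | ∀ b ∈ B, x + b ∈ A}

/-- Lemma 2 of the paper: constraint satisfaction under feasibility
(hypothesis-explicit form). -/
theorem constraint_satisfaction_under_feasibility
    (n N : ℕ) (hn : 1 ≤ n) (hN : 1 ≤ N)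
    (F A : Matrix (Fin n) (Fin n) ℝ) (b : Fin n → ℝ)
    (X : Set (Fin n → ℝ)) (U : Set ℝ)
    (W Ω₁ : Set (Fin n → ℝ))
    (hW : (fun v => F *ᵥ v) '' W + Ω₁ ⊆ W)
    (Ahat : ℕ → Matrix (Fin n) (Fin n) ℝ) (bhat : ℕ → (Fin n → ℝ))
    (hest : ∀ i : ℕ, ∀ x ∈ X, ∀ u ∈ U,
      (A - Ahat (i + 1)) *ᵥ x + u • (b - bhat (i + 1)) ∈ Ω₁)
    (u : ℕ → ℝ) (x xhat : ℕ → (Fin n → ℝ))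
    (hplant : ∀ i : ℕ, x (i + 1) = A *ᵥ x i + u i • b)
    (hobs : ∀ i : ℕ, xhat (i + 1) =
      F *ᵥ xhat i + (Ahat (i + 1) - F) *ᵥ x i + u i • bhat (i + 1))
    (hx0 : x 0 ∈ X) (hxt0 : x 0 - xhat 0 ∈ W)
    (hfeas : ∀ i : ℕ, 1 ≤ i → i ≤ N →
      u (i - 1) ∈ U ∧ xhat i ∈ pontryaginDiff X W) :
    ∀ i : ℕ, 1 ≤ i → i ≤ N → x i - xhat i ∈ W ∧ x i ∈ X := by
  have key : ∀ i : ℕ, i ≤ N → x i - xhat i ∈ W ∧ x i ∈ X := by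
    intro i
    induction i with
    | zero => exact fun _ => ⟨hxt0, hx0⟩
    | succ i ih =>
      intro h
      obtain ⟨hWi, hXi⟩ := ih (by omega)
      obtain ⟨hu, hxh⟩ := hfeas (i + 1) (by omega) h
      rw [Nat.add_sub_cancel] at hu
      have heq : x (i + 1) - xhat (i + 1) =
          F *ᵥ (x i - xhat i) +
            ((A - Ahat (i + 1)) *ᵥ x i + u i • (b - bhat (i + 1))) := by
        rw [hplant, hobs]
        simp only [Matrix.sub_mulVec, Matrix.mulVec_sub, smul_sub]
        abel
      have hmem : x (i + 1) - xhat (i + 1) ∈ W := by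
        rw [heq]
        exact hW (Set.add_mem_add ⟨_, hWi, rfl⟩ (hest i _ hXi _ hu))
      refine ⟨hmem, ?_⟩
      have := hxh _ hmem
      rwa [add_sub_cancel] at this
  exact fun i _ h2 => key i h2
end

section
/- Parameter-update shift of the tube constraint (middle-step inclusion in the proof of Theorem 1): Let S, Ω₂, Ω₃ ⊆ ℝ^n with Ω₃ nonempty and convex, let i ≥ 0, let Â, Â' ∈ ℝ^{n×n} and b̂, b̂' ∈ ℝ^n, let s ∈ ℝ^n and u ∈ ℝ. If Â s + b̂ u ∈ S ⊖ (Ω₂ + (i+1)•Ω₃) and (Â' − Â)s + (b̂' − b̂)u ∈ Ω₃, then Â' s + b̂' u ∈ S ⊖ (Ω₂ + i•Ω₃). -/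
open Matrix Pointwise

/-- Parameter-update shift of the tube constraint
(middle-step inclusion in the proof of Theorem 1 of the paper). -/
theorem parameter_update_tube_shift
    (n : ℕ) (S Ω₂ Ω₃ : Set (Fin n → ℝ))
    (hne : Ω₃.Nonempty) (hconv : Convex ℝ Ω₃)
    (i : ℕ)
    (Ahat Ahat' : Matrix (Fin n) (Fin n) ℝ) (bhat bhat' : Fin n → ℝ)
    (s : Fin n → ℝ) (u : ℝ)
    (h1 : Ahat *ᵥ s + u • bhat ∈
      pontryaginDiff S (Ω₂ + ((i : ℝ) + 1) • Ω₃))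
    (h2 : (Ahat' - Ahat) *ᵥ s + u • (bhat' - bhat) ∈ Ω₃) :
    Ahat' *ᵥ s + u • bhat' ∈ pontryaginDiff S (Ω₂ + (i : ℝ) • Ω₃) := by
  intro b hb
  obtain ⟨w, hw, z', ⟨z, hz, rfl⟩, rfl⟩ := hb
  set d := (Ahat' - Ahat) *ᵥ s + u • (bhat' - bhat) with hd
  -- d + i • z ∈ (i+1) • Ω₃
  have hip : (0:ℝ) < (i : ℝ) + 1 := by positivity
  have hcomb : (((i:ℝ)+1)⁻¹) • d + ((i:ℝ)/((i:ℝ)+1)) • z ∈ Ω₃ := by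
    apply hconv h2 hz
    · positivity
    · positivity
    · field_simp
      ring
  have hmem : d + (i:ℝ) • z ∈ ((i:ℝ)+1) • Ω₃ := by
    refine ⟨_, hcomb, ?_⟩
    show ((i:ℝ)+1) • (((i:ℝ)+1)⁻¹ • d + ((i:ℝ)/((i:ℝ)+1)) • z) = d + (i:ℝ) • z
    rw [smul_add, smul_smul, smul_smul, mul_inv_cancel₀ hip.ne', one_smul]
    congr 1
    field_simp
  have := h1 (w + (d + (i:ℝ) • z)) ⟨w, hw, _, hmem, rfl⟩
  have heq : Ahat' *ᵥ s + u • bhat' + (w + (i:ℝ) • z)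
      = Ahat *ᵥ s + u • bhat + (w + (d + (i:ℝ) • z)) := by
    simp only [hd, sub_mulVec, smul_sub]
    abel
  rw [heq]
  exact this
end

section
/- Confinement of the error reachable sets (combination of equations (15) and (16) of the paper): Let F ∈ ℝ^{n×n} and W₀, Ω, Ω₁ ⊆ ℝ^n with F·W₀ ⊆ W₀, 0 ∈ Ω, and F·Ω + Ω₁ ⊆ Ω. Then for every i ≥ 0, F^i·W₀ + ∑_{k=0}^{i−1} F^k·Ω₁ ⊆ W₀ + Ω, where the empty Minkowski sum (i = 0) is {0}. -/
open Matrix Pointwise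

lemma mulVec_image_sum {n : ℕ} (F : Matrix (Fin n) (Fin n) ℝ)
    (i : ℕ) (g : ℕ → Set (Fin n → ℝ)) :
    (fun v => F *ᵥ v) '' (∑ k ∈ Finset.range i, g k) =
      ∑ k ∈ Finset.range i, (fun v => F *ᵥ v) '' g k := by
  induction i with
  | zero =>
      simp only [Finset.range_zero, Finset.sum_empty]
      ext x
      simp [Set.mem_zero]
  | succ m ih =>
      rw [Finset.sum_range_succ, Finset.sum_range_succ, ← ih]
      exact Set.image_add (F.mulVecLin : (Fin n → ℝ) →+ (Fin n → ℝ))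

/-- Confinement of the error reachable sets
(combination of equations (15) and (16) of the paper). -/
theorem error_reachable_sets_confined
    (n : ℕ) (F : Matrix (Fin n) (Fin n) ℝ)
    (W₀ Ω Ω₁ : Set (Fin n → ℝ))
    (hW₀ : (fun v => F *ᵥ v) '' W₀ ⊆ W₀)
    (h0 : (0 : Fin n → ℝ) ∈ Ω)
    (hRPI : (fun v => F *ᵥ v) '' Ω + Ω₁ ⊆ Ω) :
    ∀ i : ℕ,
      (fun v => (F ^ i) *ᵥ v) '' W₀ +
        ∑ k ∈ Finset.range i, (fun v => (F ^ k) *ᵥ v) '' Ω₁ ⊆ W₀ + Ω := by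
  have hWpow : ∀ i : ℕ, (fun v => (F ^ i) *ᵥ v) '' W₀ ⊆ W₀ := by
    intro i
    induction i with
    | zero => simp
    | succ m ih =>
        intro x hx
        obtain ⟨y, hy, rfl⟩ := hx
        show (F ^ (m + 1)) *ᵥ y ∈ W₀
        have : (F ^ (m + 1)) *ᵥ y = F *ᵥ ((F ^ m) *ᵥ y) := by
          rw [pow_succ', Matrix.mulVec_mulVec]
        rw [this]
        exact hW₀ ⟨(F ^ m) *ᵥ y, ih ⟨y, hy, rfl⟩, rfl⟩
  have hSum : ∀ i : ℕ, (∑ k ∈ Finset.range i, (fun v => (F ^ k) *ᵥ v) '' Ω₁) ⊆ Ω := by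
    intro i
    induction i with
    | zero =>
        simp only [Finset.range_zero, Finset.sum_empty]
        intro x hx
        rw [Set.mem_zero] at hx
        exact hx ▸ h0
    | succ m ih =>
        rw [Finset.sum_range_succ']
        have heq : ∀ k, (fun v => (F ^ (k + 1)) *ᵥ v) '' Ω₁ =
            (fun v => F *ᵥ v) '' ((fun v => (F ^ k) *ᵥ v) '' Ω₁) := by
          intro k
          rw [← Set.image_comp]
          ext x
          simp [Function.comp, pow_succ', Matrix.mulVec_mulVec]
        calc (∑ k ∈ Finset.range m, (fun v => (F ^ (k + 1)) *ᵥ v) '' Ω₁) +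
              (fun v => (F ^ 0) *ᵥ v) '' Ω₁
            = (fun v => F *ᵥ v) '' (∑ k ∈ Finset.range m, (fun v => (F ^ k) *ᵥ v) '' Ω₁)
              + Ω₁ := by
              rw [mulVec_image_sum]
              congr 1
              · exact Finset.sum_congr rfl fun k _ => heq k
              · simp
          _ ⊆ (fun v => F *ᵥ v) '' Ω + Ω₁ :=
              Set.add_subset_add_right (Set.image_mono ih)
          _ ⊆ Ω := hRPI
  intro i
  exact Set.add_subset_add (hWpow i) (hSum i)
end

section
/- Theorem 1 of the paper (one-step recursive feasibility of the homothetic-tube optimization 𝕆ℙ2): Let n ≥ 1, N ≥ 2, j ≥ 1. Fix d₁, …, d_j ∈ ℝ^n and let D := conv{d₁, …, d_j}. Let X̂ ⊆ ℝ^n, let U ⊆ ℝ be convex, let Ω₂, Ω₃ ⊆ ℝ^n with Ω₃ nonempty and convex, let ξ ≥ 0 and X̂_T := ξ•D with X̂_T ⊆ X̂, let λ ∈ (0,1), K ∈ ℝ^{1×n}, and let Ψ be a set of pair253 (Â, b̂) ∈ ℝ^{n×n} × ℝ^n. Assume: (i) for all (Â, b̂) ∈ Ψ and all x ∈ X̂_T: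 (Â + b̂K)x ∈ λ•X̂_T and Kx ∈ U; (ii) λ•X̂_T ⊆ X̂_T ⊖ (Ω₂ + (N−1)•Ω₃); (iii) for all (Â, b̂), (Â', b̂') ∈ Ψ and all x̂ ∈ X̂, u ∈ U: (Â' − Â)x̂ + (b̂' − b̂)u ∈ Ω₃. Let (Â_t, b̂_t), (Â_{t+1}, b̂_{t+1}) ∈ Ψ. Suppose a feasible tube exists at time t: centers β₀, …, β_N ∈ ℝ^n and scalars α₀, …, α_N with α₀ = 0, α_i ≥ 0, sections S_i := {β_i} + α_i•D satisfying S_i ⊆ X̂ for i = 0, …, N−1 and S_N ⊆ X̂_T, and vertex controls u_i^k ∈ U (i = 0,…,N−1, k = 1,…,j) with Â_t(β_i + α_i d_k) + b̂_t u_i^k ∈ S_{i+1} ⊖ (Ω₂ + i•Ω₃) for all such i, k. Let x̂₊ ∈ S₁. Then a feasible tube exists at time t+1: there exist centers β'₀, …, β'_N and scalars α'₀, …, α'_N with α'₀ = 0, β'₀ = x̂₊, α'_i ≥ 0, sections S'_i := {β'_i} + α'_i•D satisfying S'_i ⊆ X̂ for i = 0, …, N−1 and S'_N ⊆ X̂_T,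 and controls u'^k_i ∈ U with Â_{t+1}(β'_i + α'_i d_k) + b̂_{t+1} u'^k_i ∈ S'_{i+1} ⊖ (Ω₂ + i•Ω₃) for all i = 0, …, N−1 and k = 1, …, j. -/
open Matrix Pointwise

private lemma mem_sect {n : ℕ} {β : Fin n → ℝ} {α : ℝ} {D : Set (Fin n → ℝ)}
    {y : Fin n → ℝ} :
    y ∈ ({β} + α • D : Set (Fin n → ℝ)) ↔ ∃ z ∈ D, y = β + α • z := by
  simp only [Set.mem_add, Set.mem_singleton_iff, Set.mem_smul_set]
  constructor
  · rintro ⟨x, rfl, _, ⟨z, hz, rfl⟩, rfl⟩; exact ⟨z, hz, rfl⟩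
  · rintro ⟨z, hz, rfl⟩; exact ⟨β, rfl, α • z, ⟨z, hz, rfl⟩, rfl⟩

private lemma sect_hull {n j : ℕ} (β : Fin n → ℝ) (α : ℝ) (d : Fin j → (Fin n → ℝ)) :
    ({β} + α • convexHull ℝ (Set.range d) : Set (Fin n → ℝ)) =
      convexHull ℝ (Set.range (fun k => β + α • d k)) := by
  have h1 : ({β} : Set (Fin n → ℝ)) = convexHull ℝ {β} := (convexHull_singleton β).symm
  rw [← convexHull_smul, h1, ← convexHull_add]
  congr 1
  ext y
  simp only [Set.mem_add, Set.mem_singleton_iff, Set.mem_smul_set, Set.mem_range]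
  constructor
  · rintro ⟨x, rfl, _, ⟨_, ⟨k, rfl⟩, rfl⟩, rfl⟩; exact ⟨k, rfl⟩
  · rintro ⟨k, rfl⟩; exact ⟨β, rfl, α • d k, ⟨d k, ⟨k, rfl⟩, rfl⟩, rfl⟩

private lemma pd_convex {n : ℕ} {S B : Set (Fin n → ℝ)} (hS : Convex ℝ S) :
    Convex ℝ (pontryaginDiff S B) := by
  intro x hx y hy a b ha hb hab w hw
  have e : a • x + b • y + w = a • (x + w) + b • (y + w) := by
    funext i
    simp only [Pi.add_apply, Pi.smul_apply, smul_eq_mul]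
    linear_combination (-(w i)) * hab
  rw [e]
  exact hS (hx w hw) (hy w hw) ha hb hab

private lemma pd_shift {n : ℕ} {S Ω₂ Ω₃ : Set (Fin n → ℝ)} (hconv : Convex ℝ Ω₃)
    {c : ℝ} (hc : 0 ≤ c) {y δ : Fin n → ℝ}
    (hy : y ∈ pontryaginDiff S (Ω₂ + (c + 1) • Ω₃)) (hδ : δ ∈ Ω₃) :
    y + δ ∈ pontryaginDiff S (Ω₂ + c • Ω₃) := by
  intro w hw
  rw [Set.mem_add] at hw
  obtain ⟨ω, hω, v', ⟨v, hv, rfl⟩, rfl⟩ := hw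
  have hc1 : (0:ℝ) < c + 1 := by linarith
  set u : Fin n → ℝ := (1 / (c + 1)) • δ + (c / (c + 1)) • v with hu_def
  have hu : u ∈ Ω₃ := by
    apply hconv hδ hv (by positivity) (by positivity)
    rw [← add_div, add_comm 1 c, div_self (ne_of_gt hc1)]
  have key : (c + 1) • u = δ + c • v := by
    rw [hu_def, smul_add, smul_smul, smul_smul]
    have h1 : (c + 1) * (1 / (c + 1)) = 1 := by field_simp
    have h2 : (c + 1) * (c / (c + 1)) = c := by field_simp
    rw [h1, h2, one_smul]
  have hmem : ω + (c + 1) • u ∈ Ω₂ + (c + 1) • Ω₃ :=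
    Set.mem_add.mpr ⟨ω, hω, (c + 1) • u, Set.smul_mem_smul_set hu, rfl⟩
  have := hy _ hmem
  rw [key] at this
  have e : y + δ + (ω + c • v) = y + (ω + (δ + c • v)) := by abel
  rw [e]; exact this

private lemma vmv {n : ℕ} (b K x : Fin n → ℝ) :
    Matrix.vecMulVec b K *ᵥ x = (K ⬝ᵥ x) • b := by
  ext i
  simp only [Matrix.mulVec, Matrix.vecMulVec, dotProduct, Matrix.of_apply,
    Pi.smul_apply, smul_eq_mul, Finset.sum_mul]
  exact Finset.sum_congr rfl fun k _ => by ring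

/-- Theorem 1 of the paper: one-step recursive feasibility of the
homothetic-tube optimization 𝕆ℙ2. -/
theorem homothetic_tube_recursive_feasibility
    (n N j : ℕ) (hn : 1 ≤ n) (hN : 2 ≤ N) (hj : 1 ≤ j)
    (d : Fin j → (Fin n → ℝ))
    (D : Set (Fin n → ℝ)) (hD : D = convexHull ℝ (Set.range d))
    (Xhat : Set (Fin n → ℝ)) (U : Set ℝ) (hU : Convex ℝ U)
    (Ω₂ Ω₃ : Set (Fin n → ℝ)) (hΩ₃ne : Ω₃.Nonempty) (hΩ₃conv : Convex ℝ Ω₃)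
    (ξ : ℝ) (hξ : 0 ≤ ξ)
    (XT : Set (Fin n → ℝ)) (hXT : XT = ξ • D) (hXTX : XT ⊆ Xhat)
    (lam : ℝ) (hlam : lam ∈ Set.Ioo (0 : ℝ) 1)
    (K : Fin n → ℝ)
    (Ψ : Set (Matrix (Fin n) (Fin n) ℝ × (Fin n → ℝ)))
    -- (i) λ-contractive terminal set with admissible terminal controller
    (hterm : ∀ p ∈ Ψ, ∀ x ∈ XT,
      (p.1 + vecMulVec p.2 K) *ᵥ x ∈ lam • XT ∧ K ⬝ᵥ x ∈ U)
    -- (ii) inequality (29)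
    (hcontract : lam • XT ⊆
      pontryaginDiff XT (Ω₂ + ((N - 1 : ℕ) : ℝ) • Ω₃))
    -- (iii) one-step parameter drift lies in Ω₃
    (hdrift : ∀ p ∈ Ψ, ∀ q ∈ Ψ, ∀ xhat ∈ Xhat, ∀ u ∈ U,
      (q.1 - p.1) *ᵥ xhat + u • (q.2 - p.2) ∈ Ω₃)
    -- consecutive parameter estimates
    (At At1 : Matrix (Fin n) (Fin n) ℝ) (bt bt1 : Fin n → ℝ)
    (hAt : (At, bt) ∈ Ψ) (hAt1 : (At1, bt1) ∈ Ψ)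
    -- a feasible tube at time t
    (β : ℕ → (Fin n → ℝ)) (α : ℕ → ℝ) (uc : ℕ → Fin j → ℝ)
    (hα0 : α 0 = 0) (hαpos : ∀ i ≤ N, 0 ≤ α i)
    (hSX : ∀ i < N, {β i} + α i • D ⊆ Xhat)
    (hSN : {β N} + α N • D ⊆ XT)
    (hucU : ∀ i < N, ∀ k : Fin j, uc i k ∈ U)
    (hcons : ∀ i < N, ∀ k : Fin j,
      At *ᵥ (β i + α i • d k) + uc i k • bt ∈
        pontryaginDiff ({β (i + 1)} + α (i + 1) • D) (Ω₂ + (i : ℝ) • Ω₃))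
    -- current state estimate lies in the first tube section
    (xplus : Fin n → ℝ) (hxplus : xplus ∈ {β 1} + α 1 • D) :
    -- a feasible tube exists at time t+1
    ∃ (β' : ℕ → (Fin n → ℝ)) (α' : ℕ → ℝ) (uc' : ℕ → Fin j → ℝ),
      α' 0 = 0 ∧ β' 0 = xplus ∧ (∀ i ≤ N, 0 ≤ α' i) ∧
      (∀ i < N, {β' i} + α' i • D ⊆ Xhat) ∧
      ({β' N} + α' N • D ⊆ XT) ∧
      (∀ i < N, ∀ k : Fin j,
        uc' i k ∈ U ∧
        At1 *ᵥ (β' i + α' i • d k) + uc' i k • bt1 ∈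
          pontryaginDiff ({β' (i + 1)} + α' (i + 1) • D) (Ω₂ + (i : ℝ) • Ω₃)) := by
  subst hD
  set D := convexHull ℝ (Set.range d) with hD
  have hd : ∀ k, d k ∈ D := fun k => subset_convexHull ℝ _ ⟨k, rfl⟩
  have hmemS : ∀ i k, β i + α i • d k ∈ ({β i} + α i • D : Set _) :=
    fun i k => mem_sect.mpr ⟨d k, hd k, rfl⟩
  have hsectconv : ∀ (b : Fin n → ℝ) (a : ℝ), Convex ℝ ({b} + a • D : Set _) :=
    fun b a => (convex_singleton b).add ((convex_convexHull ℝ _).smul a)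
  -- the set {0} + ξ • D is the terminal set
  have hset0 : ({(0 : Fin n → ℝ)} + ξ • D : Set _) = XT := by
    rw [hXT]
    ext y
    rw [mem_sect]
    simp only [Set.mem_smul_set, zero_add]
    constructor
    · rintro ⟨z, hz, rfl⟩; exact ⟨z, hz, rfl⟩
    · rintro ⟨z, hz, rfl⟩; exact ⟨z, hz, rfl⟩
  -- Step 0: existence of a suitable control for the first step
  set pair : Fin j → (Fin n → ℝ) × ℝ := fun k => (β 1 + α 1 • d k, uc 1 k) with hpair
  have hx1 : xplus ∈ convexHull ℝ (Set.range fun k => β 1 + α 1 • d k) := by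
    rw [← sect_hull]; exact hxplus
  have hfst : (LinearMap.fst ℝ (Fin n → ℝ) ℝ) '' convexHull ℝ (Set.range pair)
      = convexHull ℝ (Set.range fun k => β 1 + α 1 • d k) := by
    rw [LinearMap.image_convexHull]
    congr 1
    rw [← Set.range_comp]
    rfl
  rw [← hfst] at hx1
  obtain ⟨p, hp, hp1⟩ := hx1
  have hp1' : p.1 = xplus := hp1
  have hu0U : p.2 ∈ U := by
    have h2 : (LinearMap.snd ℝ (Fin n → ℝ) ℝ) '' convexHull ℝ (Set.range pair) ⊆ U := by
      rw [LinearMap.image_convexHull]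
      apply convexHull_min _ hU
      rintro _ ⟨_, ⟨k, rfl⟩, rfl⟩
      exact hucU 1 (by omega) k
    exact h2 ⟨p, hp, rfl⟩
  set g : ((Fin n → ℝ) × ℝ) →ₗ[ℝ] (Fin n → ℝ) :=
    At.mulVecLin.comp (LinearMap.fst ℝ (Fin n → ℝ) ℝ)
      + (LinearMap.snd ℝ (Fin n → ℝ) ℝ).smulRight bt with hg
  have hgval : ∀ q : (Fin n → ℝ) × ℝ, g q = At *ᵥ q.1 + q.2 • bt := fun q => rfl
  have hgp : g p ∈ pontryaginDiff ({β 2} + α 2 • D) (Ω₂ + ((1 : ℕ) : ℝ) • Ω₃) := by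
    have hsub : g '' convexHull ℝ (Set.range pair)
        ⊆ pontryaginDiff ({β 2} + α 2 • D) (Ω₂ + ((1 : ℕ) : ℝ) • Ω₃) := by
      rw [LinearMap.image_convexHull]
      apply convexHull_min _ (pd_convex (hsectconv _ _))
      rintro _ ⟨_, ⟨k, rfl⟩, rfl⟩
      have := hcons 1 (by omega) k
      rw [hgval]
      exact this
    exact hsub ⟨p, hp, rfl⟩
  have hstep0 : At1 *ᵥ xplus + p.2 • bt1 ∈
      pontryaginDiff ({β 2} + α 2 • D) (Ω₂ + ((0 : ℕ) : ℝ) • Ω₃) := by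
    have hδ : (At1 - At) *ᵥ xplus + p.2 • (bt1 - bt) ∈ Ω₃ :=
      hdrift _ hAt _ hAt1 xplus (hSX 1 (by omega) hxplus) _ hu0U
    have heq : At1 *ᵥ xplus + p.2 • bt1
        = g p + ((At1 - At) *ᵥ xplus + p.2 • (bt1 - bt)) := by
      rw [hgval, hp1', Matrix.sub_mulVec, smul_sub]; abel
    rw [heq]
    refine pd_shift hΩ₃conv (by norm_num) ?_ hδ
    have hcast : ((0 : ℕ) : ℝ) + 1 = ((1 : ℕ) : ℝ) := by norm_num
    rw [hcast]
    exact hgp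
  -- the candidate tube at time t+1
  refine ⟨fun i => if i = 0 then xplus else if i = N then 0 else β (i + 1),
    fun i => if i = 0 then 0 else if i = N then ξ else α (i + 1),
    fun i k => if i = 0 then p.2 else if i = N - 1 then K ⬝ᵥ (β N + α N • d k)
      else uc (i + 1) k, ?_, ?_, ?_, ?_, ?_, ?_⟩
  · simp
  · simp
  · intro i hi
    by_cases h0 : i = 0
    · simp only [if_pos h0]; exact le_rfl
    · by_cases hiN : i = N
      · simp only [if_neg h0, if_pos hiN]; exact hξ
      · simp only [if_neg h0, if_neg hiN]
        exact hαpos (i + 1) (by omega)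
  · intro i hi
    by_cases h0 : i = 0
    · simp only [if_pos h0]
      intro y hy
      rw [mem_sect] at hy
      obtain ⟨z, hz, rfl⟩ := hy
      rw [zero_smul, add_zero]
      exact hSX 1 (by omega) hxplus
    · have hiN : i ≠ N := by omega
      simp only [if_neg h0, if_neg hiN]
      by_cases hE : i + 1 = N
      · rw [hE]
        exact fun y hy => hXTX (hSN hy)
      · exact hSX (i + 1) (by omega)
  · have hN0 : N ≠ 0 := by omega
    dsimp only
    rw [if_neg hN0, if_neg hN0, if_pos rfl, if_pos rfl, hset0]
  · intro i hi k
    by_cases h0 : i = 0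
    · have h1N : ¬(i + 1 = 0) := by omega
      have h1N' : ¬(i + 1 = N) := by omega
      simp only [if_pos h0, if_neg h1N, if_neg h1N', zero_smul, add_zero]
      refine ⟨hu0U, ?_⟩
      subst h0
      show At1 *ᵥ xplus + p.2 • bt1 ∈
        pontryaginDiff ({β 2} + α 2 • D) (Ω₂ + ((0 : ℕ) : ℝ) • Ω₃)
      exact hstep0
    · by_cases hE : i + 1 = N
      · -- terminal step
        have hi' : i = N - 1 := by omega
        have hiN : ¬(i = N) := by omega
        have h10 : ¬(i + 1 = 0) := by omega
        simp only [if_neg h0, if_neg hiN, if_pos hi', if_neg h10, if_pos hE]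
        rw [hE]
        have hxT : β N + α N • d k ∈ XT := hSN (hmemS N k)
        obtain ⟨hlxt, hKU⟩ := hterm (At1, bt1) hAt1 (β N + α N • d k) hxT
        refine ⟨hKU, ?_⟩
        have hmv : (At1 + vecMulVec bt1 K) *ᵥ (β N + α N • d k)
            = At1 *ᵥ (β N + α N • d k) + (K ⬝ᵥ (β N + α N • d k)) • bt1 := by
          rw [Matrix.add_mulVec, vmv]
        rw [← hmv, hset0, hi']
        exact hcontract hlxt
      · -- intermediate step
        have h1 : i + 1 ≠ 0 := by omega
        have h2 : i + 1 ≠ N := hE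
        have hiN : i ≠ N := by omega
        have hiN1 : i ≠ N - 1 := by omega
        simp only [if_neg h0, if_neg hiN, if_neg hiN1, if_neg h1, if_neg h2]
        refine ⟨hucU (i + 1) (by omega) k, ?_⟩
        have hy := hcons (i + 1) (by omega) k
        have hcast : ((i + 1 : ℕ) : ℝ) = (i : ℝ) + 1 := by push_cast; ring
        rw [hcast] at hy
        have hxX : β (i + 1) + α (i + 1) • d k ∈ Xhat :=
          hSX (i + 1) (by omega) (hmemS (i + 1) k)
        have hδ : (At1 - At) *ᵥ (β (i + 1) + α (i + 1) • d k)
            + uc (i + 1) k • (bt1 - bt) ∈ Ω₃ :=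
          hdrift _ hAt _ hAt1 _ hxX _ (hucU (i + 1) (by omega) k)
        have heq : At1 *ᵥ (β (i + 1) + α (i + 1) • d k) + uc (i + 1) k • bt1
            = (At *ᵥ (β (i + 1) + α (i + 1) • d k) + uc (i + 1) k • bt)
              + ((At1 - At) *ᵥ (β (i + 1) + α (i + 1) • d k)
                + uc (i + 1) k • (bt1 - bt)) := by
          rw [Matrix.sub_mulVec, smul_sub]; abel
        rw [heq]
        exact pd_shift hΩ₃conv (Nat.cast_nonneg i) hy hδ
end
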